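/- Let X be standard Cauchy. With E := exp(X − 1/2) and G := (exp(X − 1/2) + exp(−X − 1/2))/2, one has E/G = 2/(1 + e^{−2X}), log(E/G) ≤ log 2 and log(E/G) ≤ log 2 + 2X pointwise, and E[log(E/G)] = −∞ under the Cauchy distribution (since ∫_{−∞}^0 (log 2 + 2x)/(π(1+x²)) dx = −∞). -/

import Mathlib

open MeasureTheory ENNReal Filter Set
open scoped Classical
noncomputable section

/-- The positive part of an extended real, as an extended nonnegative real. -/
def erealPos (a : EReal) : ℝ≥0∞ := if a = ⊤ then ⊤ else ENNReal.ofReal a.toReal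

/-- Generalized expectation `E[f] = E[f⁺] - E[f⁻]`, valued in the extended reals. -/
def eexp {Ω : Type*} {mΩ : MeasurableSpace Ω} (μ : Measure Ω) (f : Ω → EReal) : EReal :=
  ((∫⁻ ω, erealPos (f ω) ∂μ : ℝ≥0∞) : EReal) - ((∫⁻ ω, erealPos (-(f ω)) ∂μ : ℝ≥0∞) : EReal)

/-- The standard Cauchy distribution on `ℝ`, with density `1/(π(1+x²))`. -/
def cauchyMeasure : Measure ℝ :=
  volume.withDensity fun x => ENNReal.ofReal (1 / (Real.pi * (1 + x ^ 2)))

lemma erealPos_neg_coe (r : ℝ) : erealPos (-(r : EReal)) = ENNReal.ofReal (-r) := by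
  rw [← EReal.coe_neg]
  unfold erealPos
  simp [EReal.coe_ne_top]

/-- `∫ 1/(2πy) dy` diverges on `[1, ∞)`. -/
lemma lint_div : ∫⁻ y in Ici (1 : ℝ), ENNReal.ofReal ((2 * Real.pi * y)⁻¹) = ⊤ := by
  rw [setLIntegral_congr Ioi_ae_eq_Ici.symm]
  by_contra h
  have hne : (∫⁻ y in Ioi (1 : ℝ), ENNReal.ofReal ((2 * Real.pi * y)⁻¹)) < ⊤ :=
    lt_top_iff_ne_top.2 h
  have hmeas : Measurable fun y : ℝ => (2 * Real.pi * y)⁻¹ :=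
    (measurable_const.mul measurable_id).inv
  have hnn : 0 ≤ᵐ[volume.restrict (Ioi (1 : ℝ))] fun y => (2 * Real.pi * y)⁻¹ := by
    filter_upwards [ae_restrict_mem measurableSet_Ioi] with y hy
    have : (0 : ℝ) < y := lt_trans one_pos hy
    positivity
  have hint : IntegrableOn (fun y : ℝ => (2 * Real.pi * y)⁻¹) (Ioi 1) := by
    refine ⟨hmeas.aestronglyMeasurable, ?_⟩
    rwa [hasFiniteIntegral_iff_ofReal hnn]
  have hint2 : IntegrableOn (fun y : ℝ => y⁻¹) (Ioi (1 : ℝ)) := by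
    have h' : IntegrableOn (fun y : ℝ => 2 * Real.pi * (2 * Real.pi * y)⁻¹) (Ioi 1) :=
      hint.const_mul (2 * Real.pi)
    refine IntegrableOn.congr_fun h' (fun y hy => ?_) measurableSet_Ioi
    have hy0 : y ≠ 0 := ne_of_gt (lt_trans one_pos hy)
    have h2pi : (2 * Real.pi) ≠ 0 := by positivity
    field_simp
  exact not_IntegrableOn_Ioi_inv hint2

/-- Cauchy example: with `E = exp(X − 1/2)` and `G = (exp(X − 1/2) + exp(−X − 1/2))/2`,
one has `E/G = 2/(1 + e^{−2X})`, `log(E/G) ≤ log 2` and `log(E/G) ≤ log 2 + 2X`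
pointwise, and `E[log(E/G)] = −∞` under the standard Cauchy distribution. -/
theorem rao_blackwell_stmt13
    (Efun Gfun : ℝ → ℝ)
    (hEfun : ∀ x, Efun x = Real.exp (x - 1/2))
    (hGfun : ∀ x, Gfun x = (Real.exp (x - 1/2) + Real.exp (-x - 1/2)) / 2) :
    (∀ x, Efun x / Gfun x = 2 / (1 + Real.exp (-2 * x))) ∧
    (∀ x, Real.log (Efun x / Gfun x) ≤ Real.log 2) ∧
    (∀ x, Real.log (Efun x / Gfun x) ≤ Real.log 2 + 2 * x) ∧
    eexp cauchyMeasure (fun x => ((Real.log (Efun x / Gfun x) : ℝ) : EReal)) = ⊥ := by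
  have hEG : ∀ x, Efun x / Gfun x = 2 / (1 + Real.exp (-2 * x)) := by
    intro x
    rw [hEfun, hGfun]
    have h1 : Real.exp (-x - 1/2) = Real.exp (x - 1/2) * Real.exp (-2 * x) := by
      rw [← Real.exp_add]; ring_nf
    rw [h1]
    have h2 : (0 : ℝ) < Real.exp (x - 1/2) := Real.exp_pos _
    have h3 : (0 : ℝ) < 1 + Real.exp (-2 * x) := by positivity
    field_simp
  have hlog : ∀ x, Real.log (Efun x / Gfun x)
      = Real.log 2 - Real.log (1 + Real.exp (-2 * x)) := by
    intro x
    have h3 : (0 : ℝ) < 1 + Real.exp (-2 * x) := by positivity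
    rw [hEG, Real.log_div two_ne_zero (ne_of_gt h3)]
  have hlb1 : ∀ x, (0 : ℝ) ≤ Real.log (1 + Real.exp (-2 * x)) := by
    intro x
    exact Real.log_nonneg (by linarith [Real.exp_pos (-2 * x)])
  have hlb2 : ∀ x, -2 * x ≤ Real.log (1 + Real.exp (-2 * x)) := by
    intro x
    have : Real.log (Real.exp (-2 * x)) ≤ Real.log (1 + Real.exp (-2 * x)) :=
      Real.log_le_log (Real.exp_pos _) (by linarith)
    rwa [Real.log_exp] at this
  refine ⟨hEG, fun x => by rw [hlog]; linarith [hlb1 x],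
    fun x => by rw [hlog]; linarith [hlb2 x], ?_⟩
  -- main divergence part
  have hneg : (∫⁻ x, erealPos (-((Real.log (Efun x / Gfun x) : ℝ) : EReal)) ∂cauchyMeasure) = ⊤ := by
    have heq : ∀ x, erealPos (-((Real.log (Efun x / Gfun x) : ℝ) : EReal))
        = ENNReal.ofReal (Real.log (1 + Real.exp (-2 * x)) - Real.log 2) := by
      intro x
      rw [erealPos_neg_coe, hlog]
      ring_nf
    simp only [heq]
    unfold cauchyMeasure
    have hdens : Measurable fun x : ℝ => ENNReal.ofReal (1 / (Real.pi * (1 + x ^ 2))) := by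
      measurability
    have hF : Measurable fun x : ℝ =>
        ENNReal.ofReal (Real.log (1 + Real.exp (-2 * x)) - Real.log 2) := by
      apply Measurable.ennreal_ofReal
      apply Measurable.sub _ measurable_const
      exact (Real.measurable_log.comp ((measurable_const.mul measurable_id).exp.const_add 1))
    rw [lintegral_withDensity_eq_lintegral_mul volume hdens hF]
    rw [eq_top_iff]
    calc (⊤ : ℝ≥0∞) = ∫⁻ x in Iic (-1 : ℝ), ENNReal.ofReal ((2 * Real.pi * (-x))⁻¹) := by
          rw [show (Iic (-1 : ℝ)) = Neg.neg ⁻¹' (Ici (1 : ℝ)) by ext y; simp]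
          rw [(Measure.measurePreserving_neg (volume : Measure ℝ)).setLIntegral_comp_preimage_emb
            (Homeomorph.neg ℝ).measurableEmbedding
            (fun y => ENNReal.ofReal ((2 * Real.pi * y)⁻¹)) (Ici 1)]
          exact lint_div.symm
      _ ≤ ∫⁻ x in Iic (-1 : ℝ), (fun x => ENNReal.ofReal (1 / (Real.pi * (1 + x ^ 2))) *
            ENNReal.ofReal (Real.log (1 + Real.exp (-2 * x)) - Real.log 2)) x := by
          apply setLIntegral_mono (hdens.mul hF)
          intro x hx
          have hx1 : x ≤ -1 := hx
          have hxneg : (1 : ℝ) ≤ -x := by linarith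
          have hx0 : x ≠ 0 := by intro h; rw [h] at hx1; norm_num at hx1
          have hA : -x ≤ Real.log (1 + Real.exp (-2 * x)) - Real.log 2 := by
            have := hlb2 x
            have hlog2 : Real.log 2 < 0.6931471808 := Real.log_two_lt_d9
            linarith
          have hB : 1 / (Real.pi * (2 * x ^ 2)) ≤ 1 / (Real.pi * (1 + x ^ 2)) := by
            apply one_div_le_one_div_of_le
            · positivity
            · have : (1 : ℝ) ≤ x ^ 2 := by nlinarith
              nlinarith [Real.pi_pos]
          have hkey : (2 * Real.pi * (-x))⁻¹ = 1 / (Real.pi * (2 * x ^ 2)) * (-x) := by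
            have hpi : Real.pi ≠ 0 := Real.pi_ne_zero
            field_simp
          simp only [Pi.mul_apply]
          rw [← ENNReal.ofReal_mul (by positivity)]
          apply ENNReal.ofReal_le_ofReal
          rw [hkey]
          apply mul_le_mul hB hA (by linarith) (by positivity)
      _ ≤ _ := setLIntegral_le_lintegral _ _
  unfold eexp
  rw [hneg]
  simp [EReal.sub_top]
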